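/- Let $A_R(x)$ and $B_1(x)$ be formal power series with nonnegative coefficients satisfying $A_R = B_1(2e^{A_R} - 1)$, with $B_1(0) = 0$ and $A_R(0) = 0$. Then $A_R(x) = R(2B_1(x)e^{-B_1(x)}) - B_1(x)$, where $R$ is the tree function satisfying $R(u) = u e^{R(u)}$, $R(0)=0$. -/

import Mathlib

open Nat

/-- The exponential of a formal power series with zero constant term
(coefficientwise truncated exponential sum). -/
noncomputable def expPS (y : PowerSeries ℝ) : PowerSeries ℝ :=
  PowerSeries.mk fun k =>
    ∑ n ∈ Finset.range (k + 1), PowerSeries.coeff k (y ^ n) / (n ! : ℝ)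

/-- Composition `f ∘ g` of formal power series, valid when `g` has zero
constant term (coefficientwise truncated sum). -/
noncomputable def compPS (f g : PowerSeries ℝ) : PowerSeries ℝ :=
  PowerSeries.mk fun k =>
    ∑ n ∈ Finset.range (k + 1), PowerSeries.coeff n f * PowerSeries.coeff k (g ^ n)

/-- The Cayley tree function `R(x) = ∑_{n ≥ 1} n^(n-1) xⁿ/n!` as a formal
power series: the unique solution of `R = x e^R` with `R(0) = 0`. -/
noncomputable def treeSeries : PowerSeries ℝ :=
  PowerSeries.mk fun n => if n = 0 then 0 else (n : ℝ) ^ (n - 1) / (n ! : ℝ)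

open PowerSeries Finset


lemma coeff_pow_eq_zero {y : PowerSeries ℝ} (hy : constantCoeff y = 0)
    {k n : ℕ} (h : k < n) : coeff k (y ^ n) = 0 := by
  have hd : (X : PowerSeries ℝ) ^ n ∣ y ^ n := pow_dvd_pow_of_dvd (X_dvd_iff.mpr hy) n
  exact (X_pow_dvd_iff.mp hd) k h

lemma coeff_mul_pow_eq_zero {y z : PowerSeries ℝ} (hy : constantCoeff y = 0)
    (hz : constantCoeff z = 0) {k n m : ℕ} (h : k < n + m) :
    coeff k (y ^ n * z ^ m) = 0 := by
  have hd : (X : PowerSeries ℝ) ^ (n + m) ∣ y ^ n * z ^ m := by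
    rw [pow_add]
    exact mul_dvd_mul (pow_dvd_pow_of_dvd (X_dvd_iff.mpr hy) n)
      (pow_dvd_pow_of_dvd (X_dvd_iff.mpr hz) m)
  exact (X_pow_dvd_iff.mp hd) k h

lemma coeff_expPS {y : PowerSeries ℝ} (hy : constantCoeff y = 0) {k K : ℕ} (hk : k ≤ K) :
    coeff k (expPS y) = ∑ n ∈ range (K + 1), coeff k (y ^ n) / n ! := by
  rw [expPS, coeff_mk]
  apply Finset.sum_subset
  · intro x hx; simp only [mem_range] at hx ⊢; omega
  · intro n _ hn
    rw [coeff_pow_eq_zero hy (by simp only [mem_range] at hn; omega), zero_div]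

lemma coeff_compPS {g : PowerSeries ℝ} (hg : constantCoeff g = 0) (f : PowerSeries ℝ)
    {k K : ℕ} (hk : k ≤ K) :
    coeff k (compPS f g) = ∑ n ∈ range (K + 1), coeff n f * coeff k (g ^ n) := by
  rw [compPS, coeff_mk]
  apply Finset.sum_subset
  · intro x hx; simp only [mem_range] at hx ⊢; omega
  · intro n _ hn
    rw [coeff_pow_eq_zero hg (by simp only [mem_range] at hn; omega), mul_zero]

lemma triangle_sum {k : ℕ} {F : ℕ → ℕ → ℝ} (hF : ∀ n m, k < n + m → F n m = 0) :
    ∑ N ∈ range (k + 1), ∑ p ∈ Finset.HasAntidiagonal.antidiagonal N, F p.1 p.2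
      = ∑ n ∈ range (k + 1), ∑ m ∈ range (k + 1), F n m := by
  rw [← Finset.sum_product']
  rw [← Finset.sum_biUnion (by
    intro a _ b _ hab
    simp only [Finset.disjoint_left, Finset.HasAntidiagonal.mem_antidiagonal]
    intro p hp hq
    exact hab (hp.symm.trans hq))]
  apply Finset.sum_subset
  · intro p hp
    simp only [Finset.mem_biUnion, mem_range, Finset.HasAntidiagonal.mem_antidiagonal] at hp
    obtain ⟨N, hN, hNp⟩ := hp
    simp only [Finset.mem_product, mem_range]
    omega
  · intro p hp hnp
    apply hF
    by_contra hc
    push_neg at hc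
    exact hnp (Finset.mem_biUnion.mpr ⟨p.1 + p.2, by simp only [mem_range]; omega,
      Finset.HasAntidiagonal.mem_antidiagonal.mpr rfl⟩)

lemma choose_div_factorial {i N : ℕ} (h : i ≤ N) :
    ((N.choose i : ℝ)) / N ! = 1 / (i ! * (N - i)!) := by
  have h2 := Nat.choose_mul_factorial_mul_factorial h
  have h3 : ((N.choose i : ℝ)) * i ! * (N - i)! = N ! := by exact_mod_cast congrArg Nat.cast h2
  have p1 : (0:ℝ) < i ! := by positivity
  have p2 : (0:ℝ) < (N - i)! := by positivity
  have p3 : (0:ℝ) < N ! := by positivity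
  field_simp
  linarith [h3]

lemma expPS_add {a b : PowerSeries ℝ} (ha : constantCoeff a = 0)
    (hb : constantCoeff b = 0) : expPS (a + b) = expPS a * expPS b := by
  ext k
  have hF : ∀ n m, k < n + m → coeff k (a ^ n * b ^ m) / ((n ! : ℝ) * m !) = 0 :=
    fun n m h => by rw [coeff_mul_pow_eq_zero ha hb h, zero_div]
  -- LHS
  have hL : coeff k (expPS (a + b))
      = ∑ N ∈ range (k + 1), ∑ p ∈ Finset.HasAntidiagonal.antidiagonal N,
          coeff k (a ^ p.1 * b ^ p.2) / ((p.1)! * (p.2)!) := by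
    rw [coeff_expPS (by simp [map_add, ha, hb]) le_rfl]
    refine Finset.sum_congr rfl fun N hN => ?_
    rw [Finset.Nat.sum_antidiagonal_eq_sum_range_succ (fun i j =>
      coeff k (a ^ i * b ^ j) / ((i)! * (j)!)) N]
    rw [add_pow, map_sum, Finset.sum_div]
    refine Finset.sum_congr rfl fun i hi => ?_
    simp only [mem_range] at hi
    rw [← map_natCast (C : ℝ →+* ℝ⟦X⟧) (N.choose i), coeff_mul_C, mul_div_assoc,
      choose_div_factorial (Nat.lt_succ_iff.mp hi), mul_one_div]
  -- RHS
  have hR : coeff k (expPS a * expPS b)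
      = ∑ n ∈ range (k + 1), ∑ m ∈ range (k + 1),
          coeff k (a ^ n * b ^ m) / ((n !:ℝ) * m !) := by
    rw [coeff_mul]
    have step : ∀ p ∈ Finset.HasAntidiagonal.antidiagonal k,
        coeff p.1 (expPS a) * coeff p.2 (expPS b)
        = ∑ n ∈ range (k + 1), ∑ m ∈ range (k + 1),
            (coeff p.1 (a ^ n) * coeff p.2 (b ^ m)) / ((n !:ℝ) * m !) := by
      intro p hp
      have hp' := Finset.HasAntidiagonal.mem_antidiagonal.mp hp
      rw [coeff_expPS ha (by omega : p.1 ≤ k), coeff_expPS hb (by omega : p.2 ≤ k),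
        Finset.sum_mul_sum]
      refine Finset.sum_congr rfl fun n _ => Finset.sum_congr rfl fun m _ => ?_
      ring
    rw [Finset.sum_congr rfl step, Finset.sum_comm]
    refine Finset.sum_congr rfl fun n _ => ?_
    rw [Finset.sum_comm]
    refine Finset.sum_congr rfl fun m _ => ?_
    rw [← Finset.sum_div, coeff_mul]
  rw [hL, hR, triangle_sum hF]

lemma constantCoeff_compPS (f g : PowerSeries ℝ) :
    coeff 0 (compPS f g) = coeff 0 f := by
  simp [compPS]

lemma compPS_X {g : PowerSeries ℝ} (hg : constantCoeff g = 0) : compPS X g = g := by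
  ext k
  rw [compPS, coeff_mk]
  rcases k with _ | k
  · simpa [PowerSeries.coeff_X] using hg.symm
  · rw [Finset.sum_eq_single 1]
    · simp [PowerSeries.coeff_X]
    · intro n _ hn
      rw [PowerSeries.coeff_X, if_neg hn, zero_mul]
    · intro h
      exact absurd (Finset.mem_range.mpr (by omega)) h

lemma compPS_one (g : PowerSeries ℝ) : compPS 1 g = 1 := by
  ext k
  rw [compPS, coeff_mk, Finset.sum_eq_single 0]
  · simp
  · intro n _ hn
    rw [PowerSeries.coeff_one, if_neg hn, zero_mul]
  · intro h
    exact absurd (Finset.mem_range.mpr (by omega)) h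

lemma compPS_mul {g : PowerSeries ℝ} (hg : constantCoeff g = 0) (f₁ f₂ : PowerSeries ℝ) :
    compPS (f₁ * f₂) g = compPS f₁ g * compPS f₂ g := by
  ext k
  have hF : ∀ n m, k < n + m →
      coeff n f₁ * coeff m f₂ * coeff k (g ^ n * g ^ m) = 0 :=
    fun n m h => by rw [coeff_mul_pow_eq_zero hg hg h, mul_zero]
  have hL : coeff k (compPS (f₁ * f₂) g)
      = ∑ N ∈ range (k + 1), ∑ p ∈ Finset.HasAntidiagonal.antidiagonal N,
          coeff p.1 f₁ * coeff p.2 f₂ * coeff k (g ^ p.1 * g ^ p.2) := by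
    rw [coeff_compPS hg _ le_rfl]
    refine Finset.sum_congr rfl fun N _ => ?_
    rw [coeff_mul, Finset.sum_mul]
    refine Finset.sum_congr rfl fun p hp => ?_
    rw [← pow_add, Finset.HasAntidiagonal.mem_antidiagonal.mp hp]
  have hR : coeff k (compPS f₁ g * compPS f₂ g)
      = ∑ n ∈ range (k + 1), ∑ m ∈ range (k + 1),
          coeff n f₁ * coeff m f₂ * coeff k (g ^ n * g ^ m) := by
    rw [coeff_mul]
    have step : ∀ p ∈ Finset.HasAntidiagonal.antidiagonal k,
        coeff p.1 (compPS f₁ g) * coeff p.2 (compPS f₂ g)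
        = ∑ n ∈ range (k + 1), ∑ m ∈ range (k + 1),
            coeff n f₁ * coeff m f₂ * (coeff p.1 (g ^ n) * coeff p.2 (g ^ m)) := by
      intro p hp
      have hp' := Finset.HasAntidiagonal.mem_antidiagonal.mp hp
      rw [coeff_compPS hg _ (by omega : p.1 ≤ k), coeff_compPS hg _ (by omega : p.2 ≤ k),
        Finset.sum_mul_sum]
      exact Finset.sum_congr rfl fun n _ => Finset.sum_congr rfl fun m _ => by ring
    rw [Finset.sum_congr rfl step, Finset.sum_comm]
    refine Finset.sum_congr rfl fun n _ => ?_
    rw [Finset.sum_comm]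
    refine Finset.sum_congr rfl fun m _ => ?_
    rw [← Finset.mul_sum, coeff_mul]
  rw [hL, hR, triangle_sum hF]

lemma compPS_pow {g : PowerSeries ℝ} (hg : constantCoeff g = 0) (f : PowerSeries ℝ) (m : ℕ) :
    compPS (f ^ m) g = (compPS f g) ^ m := by
  induction m with
  | zero => simpa using compPS_one g
  | succ m ih => rw [pow_succ, pow_succ, compPS_mul hg, ih]

lemma compPS_exp {f g : PowerSeries ℝ} (hf : constantCoeff f = 0)
    (hg : constantCoeff g = 0) : compPS (expPS f) g = expPS (compPS f g) := by
  have h0 : constantCoeff (compPS f g) = 0 := by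
    rw [← coeff_zero_eq_constantCoeff_apply, constantCoeff_compPS,
      coeff_zero_eq_constantCoeff_apply, hf]
  ext k
  rw [coeff_compPS hg _ le_rfl, coeff_expPS h0 le_rfl]
  have step : ∀ n ∈ range (k + 1), coeff n (expPS f) * coeff k (g ^ n)
      = ∑ m ∈ range (k + 1), coeff n (f ^ m) * coeff k (g ^ n) / m ! := by
    intro n hn
    rw [coeff_expPS hf (by simp only [mem_range] at hn; omega : n ≤ k), Finset.sum_mul]
    exact Finset.sum_congr rfl fun m _ => by ring
  rw [Finset.sum_congr rfl step, Finset.sum_comm]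
  refine Finset.sum_congr rfl fun m _ => ?_
  rw [← compPS_pow hg, coeff_compPS hg _ le_rfl, Finset.sum_div]

lemma findiff : ∀ n : ℕ, ∀ f : Polynomial ℝ, f.degree < n → ∀ x : ℝ,
    ∑ k ∈ range (n + 1), (-1 : ℝ) ^ k * (n.choose k) * f.eval (x + k) = 0 := by
  intro n
  induction n with
  | zero =>
    intro f hf x
    have hf0 : f = 0 := by
      rw [← Polynomial.degree_eq_bot]
      exact WithBot.lt_zero_iff.mp (by exact_mod_cast hf)
    simp [hf0]
  | succ n ih =>
    intro f hf x
    set g : Polynomial ℝ := f.comp (Polynomial.X + Polynomial.C 1) - f with hg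
    have hgdeg : g.degree < n := by
      rcases eq_or_ne f 0 with rfl | hf0
      · simp only [hg, Polynomial.zero_comp, sub_zero, Polynomial.degree_zero]
        exact WithBot.bot_lt_coe n
      · have hlc : (f.comp (Polynomial.X + Polynomial.C 1)).leadingCoeff = f.leadingCoeff := by
          rw [Polynomial.leadingCoeff_comp (by rw [Polynomial.natDegree_X_add_C]; omega),
            Polynomial.leadingCoeff_X_add_C, one_pow, mul_one]
        have hc0 : f.comp (Polynomial.X + Polynomial.C 1) ≠ 0 := by
          intro h
          apply hf0
          rw [← Polynomial.leadingCoeff_eq_zero, ← hlc, h, Polynomial.leadingCoeff_zero]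
        have hdc : (f.comp (Polynomial.X + Polynomial.C 1)).degree = f.degree := by
          rw [Polynomial.degree_eq_natDegree hc0, Polynomial.degree_eq_natDegree hf0,
            Polynomial.natDegree_comp, Polynomial.natDegree_X_add_C, mul_one]
        have h1 : g.degree < f.degree := by
          have := Polynomial.degree_sub_lt hdc hc0 hlc
          rwa [hdc, ← hg] at this
        have h2 : f.degree ≤ n := by
          have : f.natDegree < n + 1 :=
            (Polynomial.natDegree_lt_iff_degree_lt hf0).mpr (by exact_mod_cast hf)
          exact le_trans Polynomial.degree_le_natDegree (by exact_mod_cast Nat.lt_succ_iff.mp this)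
        exact lt_of_lt_of_le h1 h2
    -- IH applied to g at x
    have hihg := ih g hgdeg x
    have hgeval : ∀ k : ℕ, g.eval (x + k) = f.eval (x + k + 1) - f.eval (x + k) := by
      intro k
      simp [hg, Polynomial.eval_comp]
    -- abbreviations
    set V : ℝ := ∑ k ∈ range (n + 1), (-1 : ℝ) ^ k * (n.choose k) * f.eval (x + k) with hV
    have hV' : ∑ k ∈ range (n + 1), (-1 : ℝ) ^ k * (n.choose k) * f.eval (x + k + 1) = V := by
      have hsub : ∑ k ∈ range (n+1), ((-1:ℝ)^k * (n.choose k) * f.eval (x+k+1)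
          - (-1:ℝ)^k * (n.choose k) * f.eval (x+k)) = 0 := by
        rw [← hihg]
        exact Finset.sum_congr rfl fun k _ => by rw [hgeval k]; ring
      rw [Finset.sum_sub_distrib] at hsub
      rw [hV]
      linarith [hsub]
    -- W = f x - V
    have hW : ∑ k ∈ range (n + 1), (-1 : ℝ) ^ k * (n.choose (k+1)) * f.eval (x + k + 1)
        = f.eval x - V := by
      have h1 : V = (∑ k ∈ range n, (-1 : ℝ) ^ (k+1) * (n.choose (k+1)) * f.eval (x + ((k+1:ℕ):ℝ))) +
          (-1:ℝ)^0 * (n.choose 0) * f.eval (x + ((0:ℕ):ℝ)) := Finset.sum_range_succ' _ n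
      have h2 : ∑ k ∈ range (n+1), (-1 : ℝ) ^ k * (n.choose (k+1)) * f.eval (x + k + 1)
          = ∑ k ∈ range n, (-1 : ℝ) ^ k * (n.choose (k+1)) * f.eval (x + k + 1) := by
        rw [Finset.sum_range_succ, Nat.choose_succ_self]
        simp
      rw [h2]
      have h3 : ∀ k ∈ range n, (-1 : ℝ) ^ (k+1) * (n.choose (k+1)) * f.eval (x + ((k+1:ℕ):ℝ))
          = -((-1 : ℝ) ^ k * (n.choose (k+1)) * f.eval (x + k + 1)) := by
        intro k _
        have hck : (x + ((k+1:ℕ) : ℝ)) = x + k + 1 := by push_cast; ring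
        rw [hck, pow_succ]
        ring
      rw [Finset.sum_congr rfl h3, Finset.sum_neg_distrib] at h1
      simp only [pow_zero, Nat.choose_zero_right, Nat.cast_one, Nat.cast_zero, one_mul,
        add_zero] at h1
      linarith [h1]
    -- main computation
    have key : ∑ k ∈ range (n + 2), (-1 : ℝ) ^ k * ((n+1).choose k) * f.eval (x + k)
        = (∑ k ∈ range (n+1), (-1 : ℝ) ^ (k+1) * ((n+1).choose (k+1)) * f.eval (x + ((k+1:ℕ):ℝ)))
          + (-1:ℝ)^0 * ((n+1).choose 0) * f.eval (x + ((0:ℕ):ℝ)) := Finset.sum_range_succ' _ (n+1)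
    rw [key]
    have expand : ∀ k ∈ range (n+1), (-1 : ℝ) ^ (k+1) * ((n+1).choose (k+1)) * f.eval (x + ((k+1:ℕ):ℝ))
        = -((-1 : ℝ) ^ k * (n.choose k) * f.eval (x + k + 1))
          - ((-1 : ℝ) ^ k * (n.choose (k+1)) * f.eval (x + k + 1)) := by
      intro k _
      have hc : ((n+1).choose (k+1) : ℝ) = (n.choose k : ℝ) + (n.choose (k+1) : ℝ) := by
        rw [Nat.choose_succ_succ]; push_cast; ring
      have hck : (x + ((k+1:ℕ) : ℝ)) = x + k + 1 := by push_cast; ring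
      rw [hck, hc, pow_succ]
      ring
    rw [Finset.sum_congr rfl expand, Finset.sum_sub_distrib, Finset.sum_neg_distrib, hV', hW]
    simp only [pow_zero, Nat.choose_zero_right, Nat.cast_one, Nat.cast_zero, one_mul, add_zero]
    linarith

noncomputable def abelc (k : ℕ) (x : ℝ) : ℝ := if k = 0 then 1 else x * (x + k) ^ (k - 1)

lemma abel_identity (n : ℕ) : ∀ x y : ℝ,
    ∑ p ∈ Finset.HasAntidiagonal.antidiagonal n, (n.choose p.1 : ℝ) * abelc p.1 x * (y + p.2) ^ p.2
      = (x + y + n) ^ n := by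
  induction n with
  | zero => intro x y; simp [abelc]
  | succ n ih =>
    intro x y
    set F : ℝ → ℝ := fun w => (∑ p ∈ Finset.HasAntidiagonal.antidiagonal (n+1),
        ((n+1).choose p.1 : ℝ) * abelc p.1 x * (w + p.2) ^ p.2) - (x + w + ((n+1:ℕ):ℝ)) ^ (n+1)
      with hF
    have hder : ∀ z : ℝ, HasDerivAt F 0 z := by
      intro z
      have hLd : HasDerivAt (fun w : ℝ => ∑ p ∈ Finset.HasAntidiagonal.antidiagonal (n+1),
          ((n+1).choose p.1 : ℝ) * abelc p.1 x * (w + p.2) ^ p.2)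
          (∑ p ∈ Finset.HasAntidiagonal.antidiagonal (n+1),
          ((n+1).choose p.1 : ℝ) * abelc p.1 x * (p.2 * (z + p.2) ^ (p.2 - 1))) z := by
        apply HasDerivAt.fun_sum
        intro p _
        have h1 : HasDerivAt (fun w : ℝ => (w + (p.2:ℝ)) ^ p.2)
            ((p.2:ℝ) * (z + (p.2:ℝ)) ^ (p.2 - 1)) z := by
          simpa using ((hasDerivAt_id z).add_const (p.2:ℝ)).fun_pow p.2
        simpa [mul_assoc] using h1.const_mul (((n+1).choose p.1 : ℝ) * abelc p.1 x)
      have hRd : HasDerivAt (fun w : ℝ => (x + w + ((n+1:ℕ):ℝ)) ^ (n+1))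
          ((n+1 : ℝ) * (x + z + ((n+1:ℕ):ℝ)) ^ n) z := by
        simpa using (((hasDerivAt_id z).const_add x).add_const ((n+1:ℕ):ℝ)).fun_pow (n+1)
      have hDval : (∑ p ∈ Finset.HasAntidiagonal.antidiagonal (n+1),
          ((n+1).choose p.1 : ℝ) * abelc p.1 x * (p.2 * (z + p.2) ^ (p.2 - 1)))
          = (n+1 : ℝ) * (x + z + ((n+1:ℕ):ℝ)) ^ n := by
        rw [Finset.Nat.sum_antidiagonal_succ']
        have hz : (((0:ℕ)):ℝ) * (z + ((0:ℕ):ℝ)) ^ ((0:ℕ) - 1) = 0 := by norm_num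
        rw [hz, mul_zero, zero_add]
        have step : ∀ p ∈ Finset.HasAntidiagonal.antidiagonal n,
            ((n+1).choose p.1 : ℝ) * abelc p.1 x * (((p.2+1:ℕ):ℝ) * (z + ((p.2+1:ℕ):ℝ)) ^ ((p.2+1) - 1))
            = (n+1 : ℝ) * ((n.choose p.1 : ℝ) * abelc p.1 x * ((z+1) + (p.2:ℝ)) ^ p.2) := by
          intro p hp
          have hp' := Finset.HasAntidiagonal.mem_antidiagonal.mp hp
          have hch : ((n+1).choose p.1 : ℝ) * ((p.2+1:ℕ):ℝ) = (n+1 : ℝ) * (n.choose p.1 : ℝ) := by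
            have h2 : n.choose p.1 * (n+1) = (n+1).choose p.1 * (n+1-p.1) := Nat.choose_mul_succ_eq n p.1
            have h3 : n + 1 - p.1 = p.2 + 1 := by omega
            rw [h3] at h2
            have h4 : (n+1).choose p.1 * (p.2+1) = (n+1) * n.choose p.1 := by
              rw [← h2, mul_comm]
            exact_mod_cast h4
          have hzz : (z + ((p.2+1:ℕ):ℝ)) = (z+1) + (p.2:ℝ) := by push_cast; ring
          rw [Nat.add_sub_cancel, hzz]
          calc ((n+1).choose p.1 : ℝ) * abelc p.1 x * (((p.2+1:ℕ):ℝ) * ((z+1) + (p.2:ℝ)) ^ p.2)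
              = (((n+1).choose p.1 : ℝ) * ((p.2+1:ℕ):ℝ)) * abelc p.1 x * ((z+1) + (p.2:ℝ)) ^ p.2 := by ring
            _ = ((n+1 : ℝ) * (n.choose p.1 : ℝ)) * abelc p.1 x * ((z+1) + (p.2:ℝ)) ^ p.2 := by rw [hch]
            _ = (n+1 : ℝ) * ((n.choose p.1 : ℝ) * abelc p.1 x * ((z+1) + (p.2:ℝ)) ^ p.2) := by ring
        rw [Finset.sum_congr rfl step, ← Finset.mul_sum, ih x (z+1)]
        have : x + (z+1) + (n:ℝ) = x + z + ((n+1:ℕ):ℝ) := by push_cast; ring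
        rw [this]
      have := (hLd.sub hRd)
      rw [hDval, sub_self] at this
      exact this
    have hconst := is_const_of_deriv_eq_zero (fun z => (hder z).differentiableAt)
      (fun z => (hder z).deriv)
    have hzero : F (-(x + ((n+1:ℕ):ℝ))) = 0 := by
      rw [hF]
      simp only
      have hR0 : (x + -(x + ((n+1:ℕ):ℝ)) + ((n+1:ℕ):ℝ)) ^ (n+1) = 0 := by
        rw [show x + -(x + ((n+1:ℕ):ℝ)) + ((n+1:ℕ):ℝ) = 0 by ring, zero_pow (by omega)]
      rw [hR0]
      have hterm : ∀ p ∈ Finset.HasAntidiagonal.antidiagonal (n+1),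
          ((n+1).choose p.1 : ℝ) * abelc p.1 x * (-(x + ((n+1:ℕ):ℝ)) + (p.2:ℝ)) ^ p.2
          = x * ((-1:ℝ)^(n+1) * ((-1:ℝ)^p.1 * ((n+1).choose p.1 : ℝ) * (x + (p.1:ℝ)) ^ n)) := by
        intro p hp
        have hp' := Finset.HasAntidiagonal.mem_antidiagonal.mp hp
        have hneg : (-(x + ((n+1:ℕ):ℝ)) + (p.2:ℝ)) = -(x + (p.1:ℝ)) := by
          have : (p.2:ℝ) = ((n+1:ℕ):ℝ) - (p.1:ℝ) := by
            have : p.1 + p.2 = n+1 := hp'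
            push_cast [← this]; ring
          rw [this]; ring
        rw [hneg, neg_pow]
        have hsign : (-1:ℝ)^p.2 = (-1:ℝ)^(n+1) * (-1:ℝ)^p.1 := by
          have e : p.2 + (p.1 + p.1) = (n+1) + p.1 := by omega
          calc (-1:ℝ)^p.2 = (-1:ℝ)^p.2 * (-1:ℝ)^(p.1+p.1) := by
                rw [Even.neg_one_pow ⟨p.1, rfl⟩, mul_one]
            _ = (-1:ℝ)^((n+1)+p.1) := by rw [← pow_add, e]
            _ = (-1:ℝ)^(n+1) * (-1:ℝ)^p.1 := by rw [pow_add]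
        have habel : abelc p.1 x * (x + (p.1:ℝ)) ^ p.2 = x * (x + (p.1:ℝ)) ^ n := by
          rcases Nat.eq_zero_or_pos p.1 with h0 | hpos
          · have h2 : p.2 = n+1 := by omega
            rw [h2, h0]
            simp [abelc, pow_succ, mul_comm]
          · have h1 : p.1 ≠ 0 := by omega
            rw [abelc, if_neg h1, mul_assoc, ← pow_add]
            congr 2
            omega
        calc ((n+1).choose p.1 : ℝ) * abelc p.1 x * ((-1:ℝ)^p.2 * (x + (p.1:ℝ)) ^ p.2)
            = (-1:ℝ)^p.2 * ((n+1).choose p.1 : ℝ) * (abelc p.1 x * (x + (p.1:ℝ)) ^ p.2) := by ring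
          _ = (-1:ℝ)^p.2 * ((n+1).choose p.1 : ℝ) * (x * (x + (p.1:ℝ)) ^ n) := by rw [habel]
          _ = x * ((-1:ℝ)^p.2 * ((n+1).choose p.1 : ℝ) * (x + (p.1:ℝ)) ^ n) := by ring
          _ = x * ((-1:ℝ)^(n+1) * ((-1:ℝ)^p.1 * ((n+1).choose p.1 : ℝ) * (x + (p.1:ℝ)) ^ n)) := by
              rw [hsign]; ring
      rw [Finset.sum_congr rfl hterm, ← Finset.mul_sum, ← Finset.mul_sum]
      have hfd := findiff (n+1) (Polynomial.X ^ n) (by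
        rw [Polynomial.degree_X_pow]; exact_mod_cast Nat.lt_succ_self n) x
      have hsum : ∑ p ∈ Finset.HasAntidiagonal.antidiagonal (n+1),
          ((-1:ℝ)^p.1 * ((n+1).choose p.1 : ℝ) * (x + (p.1:ℝ)) ^ n)
          = ∑ k ∈ range (n+2), (-1:ℝ)^k * ((n+1).choose k : ℝ) * (Polynomial.X ^ n : Polynomial ℝ).eval (x + (k:ℝ)) := by
        rw [Finset.Nat.sum_antidiagonal_eq_sum_range_succ
          (fun i j => (-1:ℝ)^i * ((n+1).choose i : ℝ) * (x + (i:ℝ)) ^ n) (n+1)]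
        exact Finset.sum_congr rfl fun k _ => by simp
      rw [hsum, hfd, mul_zero, mul_zero, sub_zero]
    have hfin := hconst y (-(x + ((n+1:ℕ):ℝ)))
    rw [hzero, hF] at hfin
    simp only at hfin
    have : (↑((n:ℕ)+1):ℝ) = ((n+1:ℕ):ℝ) := by norm_num
    push_cast at hfin ⊢
    linarith [hfin]

lemma abel_special (m : ℕ) :
    ∑ p ∈ Finset.HasAntidiagonal.antidiagonal m, (m.choose p.1 : ℝ) * ((p.1:ℝ)+1)^p.1 * ((p.2:ℝ)+1)^(p.2 - 1)
      = ((m:ℝ)+2)^m := by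
  have h := abel_identity m 1 1
  have h1 : ∀ p ∈ Finset.HasAntidiagonal.antidiagonal m, (m.choose p.1 : ℝ) * abelc p.1 1 * ((1:ℝ) + p.2)^p.2
      = (m.choose p.1 : ℝ) * ((p.1:ℝ)+1)^(p.1-1) * ((p.2:ℝ)+1)^p.2 := by
    intro p hp
    have hab : abelc p.1 1 = ((p.1:ℝ)+1)^(p.1-1) := by
      rcases Nat.eq_zero_or_pos p.1 with h0 | h0
      · simp [abelc, h0]
      · rw [abelc, if_neg (by omega), one_mul, add_comm]
    rw [hab, add_comm (1:ℝ) (p.2:ℝ)]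
  rw [Finset.sum_congr rfl h1] at h
  have h2 := Finset.Nat.sum_antidiagonal_swap (n := m)
    (f := fun p => (m.choose p.1 : ℝ) * ((p.1:ℝ)+1)^(p.1-1) * ((p.2:ℝ)+1)^p.2)
  rw [← h2] at h
  have h3 : ∀ p ∈ Finset.HasAntidiagonal.antidiagonal m,
      (m.choose p.1 : ℝ) * ((p.1:ℝ)+1)^p.1 * ((p.2:ℝ)+1)^(p.2-1)
      = (m.choose p.swap.1 : ℝ) * ((p.swap.1:ℝ)+1)^(p.swap.1-1) * ((p.swap.2:ℝ)+1)^p.swap.2 := by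
    intro p hp
    have hp' := Finset.HasAntidiagonal.mem_antidiagonal.mp hp
    have hcs : m.choose p.2 = m.choose p.1 := by
      rw [show p.2 = m - p.1 by omega]
      exact Nat.choose_symm (by omega)
    simp only [Prod.fst_swap, Prod.snd_swap]
    rw [hcs]
    ring
  rw [Finset.sum_congr rfl h3, h, show (1:ℝ)+1+(m:ℝ) = (m:ℝ)+2 by ring]

lemma abel_special' (m : ℕ) :
    ∑ p ∈ Finset.HasAntidiagonal.antidiagonal m, (m.choose p.1 : ℝ) * ((p.1:ℝ)+1)^(p.1-1) * ((p.2:ℝ)+1)^p.2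
      = ((m:ℝ)+2)^m := by
  have h := abel_identity m 1 1
  have h1 : ∀ p ∈ Finset.HasAntidiagonal.antidiagonal m, (m.choose p.1 : ℝ) * abelc p.1 1 * ((1:ℝ) + p.2)^p.2
      = (m.choose p.1 : ℝ) * ((p.1:ℝ)+1)^(p.1-1) * ((p.2:ℝ)+1)^p.2 := by
    intro p hp
    have hab : abelc p.1 1 = ((p.1:ℝ)+1)^(p.1-1) := by
      rcases Nat.eq_zero_or_pos p.1 with h0 | h0
      · simp [abelc, h0]
      · rw [abelc, if_neg (by omega), one_mul, add_comm]
    rw [hab, add_comm (1:ℝ) (p.2:ℝ)]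
  rw [Finset.sum_congr rfl h1] at h
  rw [h, show (1:ℝ)+1+(m:ℝ) = (m:ℝ)+2 by ring]


lemma constantCoeff_treeSeries : constantCoeff treeSeries = 0 := by
  rw [← coeff_zero_eq_constantCoeff_apply, treeSeries, coeff_mk]
  simp

lemma coeff_treeSeries_succ (q : ℕ) :
    coeff (q+1) treeSeries = ((q:ℝ)+1) ^ q / (q+1)! := by
  rw [treeSeries, coeff_mk, if_neg (Nat.succ_ne_zero q)]
  norm_num

lemma exp_coeff_succ {y : PowerSeries ℝ} (hy : constantCoeff y = 0) (m : ℕ) :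
    ((m:ℝ)+1) * coeff (m+1) (expPS y)
      = ∑ p ∈ Finset.HasAntidiagonal.antidiagonal m,
          coeff p.1 (expPS y) * (((p.2:ℝ)+1) * coeff (p.2+1) y) := by
  have hder : ∀ n : ℕ, ((m:ℝ)+1) * coeff (m+1) (y ^ n)
      = (n:ℝ) * ∑ p ∈ Finset.HasAntidiagonal.antidiagonal m,
          coeff p.1 (y ^ (n-1)) * (((p.2:ℝ)+1) * coeff (p.2+1) y) := by
    intro n
    have h1 : coeff m ((d⁄dX ℝ) (y ^ n)) = coeff (m+1) (y^n) * ((m:ℝ)+1) := by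
      rw [PowerSeries.coeff_derivative]
      try push_cast
      try ring
    have h2 : (d⁄dX ℝ) (y ^ n) = (n : ℕ) • (y ^ (n-1) * (d⁄dX ℝ) y) := by
      rw [Derivation.leibniz_pow]
      try rfl
    have h3 : coeff m ((d⁄dX ℝ) (y ^ n)) = (n:ℝ) * ∑ p ∈ Finset.HasAntidiagonal.antidiagonal m,
        coeff p.1 (y ^ (n-1)) * (((p.2:ℝ)+1) * coeff (p.2+1) y) := by
      rw [h2, map_nsmul, nsmul_eq_mul]
      congr 1
      rw [coeff_mul]
      refine Finset.sum_congr rfl fun p _ => ?_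
      rw [PowerSeries.coeff_derivative]
      push_cast; ring
    rw [mul_comm ((m:ℝ)+1), ← h1, h3]
  rw [coeff_expPS hy (le_refl (m+1)), Finset.mul_sum]
  have step : ∀ n ∈ range (m+2), ((m:ℝ)+1) * (coeff (m+1) (y ^ n) / n !)
      = (n:ℝ) / n ! * ∑ p ∈ Finset.HasAntidiagonal.antidiagonal m,
          coeff p.1 (y ^ (n-1)) * (((p.2:ℝ)+1) * coeff (p.2+1) y) := by
    intro n _
    calc ((m:ℝ)+1) * (coeff (m+1) (y ^ n) / n !)
        = (((m:ℝ)+1) * coeff (m+1) (y ^ n)) / n ! := by ring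
      _ = ((n:ℝ) * ∑ p ∈ Finset.HasAntidiagonal.antidiagonal m,
            coeff p.1 (y ^ (n-1)) * (((p.2:ℝ)+1) * coeff (p.2+1) y)) / n ! := by
          rw [hder n]
      _ = (n:ℝ) / n ! * ∑ p ∈ Finset.HasAntidiagonal.antidiagonal m,
            coeff p.1 (y ^ (n-1)) * (((p.2:ℝ)+1) * coeff (p.2+1) y) := by ring
  rw [Finset.sum_congr rfl step]
  rw [Finset.sum_range_succ' _ (m+1)]
  simp only [Nat.cast_zero, zero_div, zero_mul, add_zero]
  have step2 : ∀ n ∈ range (m+1), ((n+1:ℕ):ℝ) / (n+1)! * ∑ p ∈ Finset.HasAntidiagonal.antidiagonal m,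
      coeff p.1 (y ^ ((n+1)-1)) * (((p.2:ℝ)+1) * coeff (p.2+1) y)
      = ∑ p ∈ Finset.HasAntidiagonal.antidiagonal m,
          (coeff p.1 (y ^ n) / n !) * (((p.2:ℝ)+1) * coeff (p.2+1) y) := by
    intro n _
    have hfac : ((n+1:ℕ):ℝ) / (n+1)! = 1 / n ! := by
      have e1 : ((n:ℝ)+1) ≠ 0 := by positivity
      have e2 : ((n !:ℕ):ℝ) ≠ 0 := by positivity
      rw [Nat.factorial_succ]
      push_cast
      field_simp
    rw [hfac, Nat.add_sub_cancel, Finset.mul_sum]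
    exact Finset.sum_congr rfl fun p _ => by ring
  rw [Finset.sum_congr rfl step2, Finset.sum_comm]
  refine Finset.sum_congr rfl fun p hp => ?_
  have hp' := Finset.HasAntidiagonal.mem_antidiagonal.mp hp
  rw [coeff_expPS hy (by omega : p.1 ≤ m), Finset.sum_mul]

lemma coeff_exp_treeSeries : ∀ m : ℕ,
    coeff m (expPS treeSeries) = ((m:ℝ)+1) ^ (m-1) / m ! := by
  intro m
  induction m using Nat.strong_induction_on with
  | _ m ih =>
    rcases m with _ | m
    · rw [coeff_expPS constantCoeff_treeSeries (le_refl 0)]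
      simp
    · have hrec := exp_coeff_succ constantCoeff_treeSeries m
      have step : ∀ p ∈ Finset.HasAntidiagonal.antidiagonal m,
          coeff p.1 (expPS treeSeries) * (((p.2:ℝ)+1) * coeff (p.2+1) treeSeries)
          = (m.choose p.1 : ℝ) * ((p.1:ℝ)+1)^(p.1-1) * ((p.2:ℝ)+1)^p.2 / m ! := by
        intro p hp
        have hp' := Finset.HasAntidiagonal.mem_antidiagonal.mp hp
        rw [ih p.1 (by omega), coeff_treeSeries_succ p.2]
        have h1 : ((p.2:ℝ)+1) * (((p.2:ℝ)+1) ^ p.2 / (p.2+1)!) = ((p.2:ℝ)+1)^p.2 / (p.2)! := by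
          have e1 : ((p.2:ℝ)+1) ≠ 0 := by positivity
          have e2 : ((p.2 !:ℕ):ℝ) ≠ 0 := by positivity
          rw [Nat.factorial_succ]
          push_cast
          field_simp
        rw [h1]
        have h2 : (m.choose p.1 : ℝ) / m ! = 1 / ((p.1)! * (p.2)!) := by
          rw [choose_div_factorial (by omega : p.1 ≤ m), show m - p.1 = p.2 by omega]
        calc ((p.1:ℝ)+1) ^ (p.1-1) / (p.1)! * (((p.2:ℝ)+1) ^ p.2 / (p.2)!)
            = (((p.1:ℝ)+1) ^ (p.1-1) * ((p.2:ℝ)+1) ^ p.2) * (1 / ((p.1)! * (p.2)!)) := by ring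
          _ = (((p.1:ℝ)+1) ^ (p.1-1) * ((p.2:ℝ)+1) ^ p.2) * ((m.choose p.1 : ℝ) / m !) := by
              rw [h2]
          _ = (m.choose p.1 : ℝ) * ((p.1:ℝ)+1) ^ (p.1-1) * ((p.2:ℝ)+1) ^ p.2 / m ! := by ring
      rw [Finset.sum_congr rfl step, ← Finset.sum_div, abel_special' m] at hrec
      have hm1 : ((m:ℝ)+1+1) ≠ 0 := by positivity
      have : coeff (m+1) (expPS treeSeries) = ((m:ℝ)+2)^m / (m ! * ((m:ℝ)+1)) := by
        push_cast at hrec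
        field_simp at hrec ⊢
        linarith [hrec]
      rw [this]
      rw [show (m+1) - 1 = m from rfl, Nat.factorial_succ]
      push_cast
      congr 1
      · congr 1; ring
      · ring

lemma treeSeries_eq : treeSeries = X * expPS treeSeries := by
  ext k
  rcases k with _ | m
  · rw [coeff_zero_eq_constantCoeff_apply, constantCoeff_treeSeries,
      coeff_zero_eq_constantCoeff_apply, map_mul, constantCoeff_X, zero_mul]
  · rw [PowerSeries.coeff_succ_X_mul, coeff_exp_treeSeries m, coeff_treeSeries_succ m]
    rcases Nat.eq_zero_or_pos m with h0 | h0
    · subst h0; norm_num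
    · rw [Nat.factorial_succ]
      push_cast
      have hps : ((m:ℝ)+1)^m = ((m:ℝ)+1) * ((m:ℝ)+1)^(m-1) := by
        rw [← pow_sub_one_mul (show m ≠ 0 by omega) ((m:ℝ)+1)]
        ring
      rw [hps]
      have e1 : ((m:ℝ)+1) ≠ 0 := by positivity
      have e2 : ((m !:ℕ):ℝ) ≠ 0 := by positivity
      field_simp

lemma coeff_pow_congr {Y Z : PowerSeries ℝ} (n : ℕ) :
    ∀ k, (∀ i, i ≤ k → coeff i Y = coeff i Z) → coeff k (Y ^ n) = coeff k (Z ^ n) := by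
  induction n with
  | zero => intro k _; rfl
  | succ n ih =>
    intro k h
    rw [pow_succ, pow_succ, coeff_mul, coeff_mul]
    refine Finset.sum_congr rfl fun p hp => ?_
    have hp' := Finset.HasAntidiagonal.mem_antidiagonal.mp hp
    rw [h p.2 (by omega), ih p.1 (fun i hi => h i (by omega))]

lemma coeff_exp_congr {Y Z : PowerSeries ℝ} (k : ℕ)
    (h : ∀ i, i ≤ k → coeff i Y = coeff i Z) :
    coeff k (expPS Y) = coeff k (expPS Z) := by
  rw [expPS, expPS, coeff_mk, coeff_mk]
  exact Finset.sum_congr rfl fun n _ => by rw [coeff_pow_congr n k h]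

lemma funeq_unique {E Y Z : PowerSeries ℝ} (hE : constantCoeff E = 0)
    (hy : Y = E * expPS Y) (hz : Z = E * expPS Z) : Y = Z := by
  ext k
  induction k using Nat.strong_induction_on with
  | _ k ih =>
    conv_lhs => rw [hy]
    conv_rhs => rw [hz]
    rw [coeff_mul, coeff_mul]
    refine Finset.sum_congr rfl fun p hp => ?_
    have hp' := Finset.HasAntidiagonal.mem_antidiagonal.mp hp
    rcases Nat.eq_zero_or_pos p.1 with h0 | h0
    · rw [h0, coeff_zero_eq_constantCoeff_apply, hE, zero_mul, zero_mul]
    · congr 1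
      exact coeff_exp_congr p.2 (fun i hi => ih i (by omega))

/-- If `A_R = B₁ (2 e^{A_R} - 1)` with `A_R(0) = B₁(0) = 0` and nonnegative
coefficients, then `A_R = R(2 B₁ e^{-B₁}) - B₁` where `R` is the tree function. -/
theorem A_R_eq_tree_of_functional_eq (A B : PowerSeries ℝ)
    (hA0 : PowerSeries.coeff 0 A = 0) (hB0 : PowerSeries.coeff 0 B = 0)
    (hApos : ∀ n, 0 ≤ PowerSeries.coeff n A)
    (hBpos : ∀ n, 0 ≤ PowerSeries.coeff n B)
    (heq : A = B * (2 * expPS A - 1)) :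
    A = compPS treeSeries (2 * B * expPS (-B)) - B := by
  have hB0' : constantCoeff B = 0 := by rwa [← coeff_zero_eq_constantCoeff_apply]
  have hA0' : constantCoeff A = 0 := by rwa [← coeff_zero_eq_constantCoeff_apply]
  set E : PowerSeries ℝ := 2 * B * expPS (-B) with hE
  have hE0 : constantCoeff E = 0 := by
    rw [hE, map_mul, map_mul, hB0', mul_zero, zero_mul]
  have hmB : constantCoeff (-B) = 0 := by rw [map_neg, hB0', neg_zero]
  have hAB : constantCoeff (A + B) = 0 := by rw [map_add, hA0', hB0', add_zero]
  have hfe1 : A + B = E * expPS (A + B) := by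
    have hsplit : expPS A = expPS (-B) * expPS (A + B) := by
      rw [← expPS_add hmB hAB]
      congr 1
      ring
    calc A + B = B * (2 * expPS A - 1) + B := by rw [← heq]
      _ = 2 * B * expPS A := by ring
      _ = 2 * B * (expPS (-B) * expPS (A + B)) := by rw [hsplit]
      _ = E * expPS (A + B) := by rw [hE]; ring
  have hT0 : constantCoeff (compPS treeSeries E) = 0 := by
    rw [← coeff_zero_eq_constantCoeff_apply, constantCoeff_compPS,
      coeff_zero_eq_constantCoeff_apply, constantCoeff_treeSeries]
  have hfe2 : compPS treeSeries E = E * expPS (compPS treeSeries E) := by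
    conv_lhs => rw [treeSeries_eq]
    rw [compPS_mul hE0, compPS_X hE0, compPS_exp constantCoeff_treeSeries hE0]
  have hmain := funeq_unique hE0 hfe1 hfe2
  rw [← hmain]
  ring
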